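/- For every positive real number x, x^{1/2} = 1/√2 + ∫₀^∞ (λ/(λ²+1) − 1/(λ+x)) dν(λ), where dν(λ) = (1/π) λ^{1/2} dλ. -/

import Mathlib

open MeasureTheory Real Set Filter Topology

noncomputable def HH (x t : ℝ) : ℝ :=
  π⁻¹ * (2 * Real.sqrt x * arctan (t / Real.sqrt x)
    - Real.sqrt 2 / 4 * (Real.log (t^2 + Real.sqrt 2 * t + 1)
        - Real.log (t^2 - Real.sqrt 2 * t + 1))
    - Real.sqrt 2 / 2 * (arctan (Real.sqrt 2 * t + 1) + arctan (Real.sqrt 2 * t - 1)))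

lemma hs2 : (Real.sqrt 2) ^ 2 = 2 := Real.sq_sqrt (by norm_num)
lemma hs0 : (0:ℝ) < Real.sqrt 2 := Real.sqrt_pos.2 (by norm_num)

lemma hP (t : ℝ) : (0:ℝ) < t^2 + Real.sqrt 2 * t + 1 := by
  nlinarith [sq_nonneg (2*t + Real.sqrt 2), hs2]

lemma hM (t : ℝ) : (0:ℝ) < t^2 - Real.sqrt 2 * t + 1 := by
  nlinarith [sq_nonneg (2*t - Real.sqrt 2), hs2]

lemma HH_deriv (x : ℝ) (hx : 0 < x) (t : ℝ) :
    HasDerivAt (HH x) (π⁻¹ * (2 * x / (x + t^2) - 2 / (1 + t^4))) t := by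
  have hsx : Real.sqrt x ≠ 0 := (Real.sqrt_pos.2 hx).ne'
  set s := Real.sqrt 2 with hsdef
  have h1 : HasDerivAt (fun t : ℝ => arctan (t / Real.sqrt x))
      ((1 + (t / Real.sqrt x)^2)⁻¹ * (Real.sqrt x)⁻¹) t := by
    simpa using ((hasDerivAt_id t).div_const (Real.sqrt x)).arctan
  have hq1 : HasDerivAt (fun t : ℝ => t^2 + s*t + 1) (2*t + s) t := by
    have := ((hasDerivAt_pow 2 t).add ((hasDerivAt_id t).const_mul s)).add_const 1
    simpa [mul_comm] using this
  have hq2 : HasDerivAt (fun t : ℝ => t^2 - s*t + 1) (2*t - s) t := by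
    have := ((hasDerivAt_pow 2 t).sub ((hasDerivAt_id t).const_mul s)).add_const 1
    simpa [mul_comm] using this
  have hl1 : HasDerivAt (fun t : ℝ => Real.log (t^2 + s*t + 1))
      ((2*t + s) / (t^2 + s*t + 1)) t := hq1.log (hP t).ne'
  have hl2 : HasDerivAt (fun t : ℝ => Real.log (t^2 - s*t + 1))
      ((2*t - s) / (t^2 - s*t + 1)) t := hq2.log (hM t).ne'
  have ha1 : HasDerivAt (fun t : ℝ => arctan (s*t + 1)) ((1 + (s*t+1)^2)⁻¹ * s) t := by
    simpa using (((hasDerivAt_id t).const_mul s).add_const 1).arctan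
  have ha2 : HasDerivAt (fun t : ℝ => arctan (s*t - 1)) ((1 + (s*t-1)^2)⁻¹ * s) t := by
    simpa using (((hasDerivAt_id t).const_mul s).sub_const 1).arctan
  have H := ((((h1.const_mul (2 * Real.sqrt x)).sub
      ((hl1.sub hl2).const_mul (s/4))).sub
      ((ha1.add ha2).const_mul (s/2))).const_mul π⁻¹)
  refine H.congr_deriv ?_
  symm
  have hx2 : Real.sqrt x ^ 2 = x := Real.sq_sqrt hx.le
  have h4 : (0:ℝ) < 1 + t^4 := by positivity
  have hxt : (0:ℝ) < x + t^2 := by positivity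
  have hC : (0:ℝ) < 1 + (s*t+1)^2 := by positivity
  have hD : (0:ℝ) < 1 + (s*t-1)^2 := by positivity
  have hden : (0:ℝ) < 1 + (t/Real.sqrt x)^2 := by positivity
  congr 1
  have hsxp : (0:ℝ) < Real.sqrt x := Real.sqrt_pos.2 hx
  have hP' : t*(t+s)+1 ≠ 0 := by have := hP t; nlinarith
  have hM' : t*(t-s)+1 ≠ 0 := by have := hM t; nlinarith
  field_simp [(hP t).ne', (hM t).ne', h4.ne', hxt.ne', hC.ne', hD.ne', hP', hM']
  have hd : (0:ℝ) < (x + t ^ 2) * Real.sqrt x * (4 * ((t ^ 2 + s * t + 1) * (t ^ 2 - s * t + 1))) *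
      (2 * ((1 + (s * t + 1) ^ 2) * (1 + (s * t - 1) ^ 2))) := by
    have h1 := mul_pos (hP t) (hM t)
    have h2 := mul_pos hC hD
    have h3 : (0:ℝ) < (x + t ^ 2) * Real.sqrt x := mul_pos hxt hsxp
    nlinarith [mul_pos (mul_pos h3 h1) h2]
  have hs2' : s ^ 2 = 2 := hs2
  have hs3 : s ^ 3 = 2 * s := by rw [pow_succ, hs2']
  have hs4 : s ^ 4 = 4 := by rw [show (4:ℕ) = 2 * 2 from rfl, pow_mul, hs2']; norm_num
  have hs5 : s ^ 5 = 4 * s := by rw [pow_succ, hs4]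
  have hs6 : s ^ 6 = 8 := by rw [pow_succ, hs5]; linear_combination 4 * hs2'
  have hs7 : s ^ 7 = 8 * s := by rw [pow_succ, hs6]
  have hs8 : s ^ 8 = 16 := by rw [show (8:ℕ) = 2 * 4 from rfl, pow_mul, hs2']; norm_num
  simp only [hx2]
  ring_nf
  simp only [hs2', hs3, hs4, hs5, hs6, hs7, hs8]
  ring_nf

example : True := trivial

lemma HH_cont (x : ℝ) : Continuous (HH x) := by
  unfold HH
  refine continuous_const.mul (Continuous.sub (Continuous.sub ?_ ?_) ?_)
  · exact continuous_const.mul (Real.continuous_arctan.comp (continuous_id.div_const _))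
  · refine continuous_const.mul (Continuous.sub ?_ ?_)
    · exact Continuous.log (by continuity) (fun t => (hP t).ne')
    · exact Continuous.log (by continuity) (fun t => (hM t).ne')
  · exact continuous_const.mul ((Real.continuous_arctan.comp (by continuity)).add
      (Real.continuous_arctan.comp (by continuity)))

lemma G_deriv (x : ℝ) (hx : 0 < x) {l : ℝ} (hl : 0 < l) :
    HasDerivAt (fun l => HH x (Real.sqrt l))
      ((l / (l ^ 2 + 1) - 1 / (l + x)) * (Real.pi⁻¹ * Real.sqrt l)) l := by
  have hsl : Real.sqrt l ^ 2 = l := Real.sq_sqrt hl.le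
  have hslp : 0 < Real.sqrt l := Real.sqrt_pos.2 hl
  have h := (HH_deriv x hx (Real.sqrt l)).comp l (Real.hasDerivAt_sqrt hl.ne')
  refine h.congr_deriv ?_
  symm
  have hsl4 : Real.sqrt l ^ 4 = l ^ 2 := by
    rw [show (4:ℕ) = 2*2 from rfl, pow_mul, hsl]
  rw [hsl, hsl4]
  have h1 : (0:ℝ) < l^2 + 1 := by positivity
  have h2 : (0:ℝ) < l + x := by positivity
  have h3 : (0:ℝ) < x + l := by positivity
  have h4 : (0:ℝ) < 1 + l^2 := by positivity
  have hpi : Real.pi ≠ 0 := Real.pi_ne_zero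
  field_simp
  linear_combination (l*x^2 - l + l^3*x^2 - l^3 + l^4*x - x) * hsl

lemma f_cont (x : ℝ) (hx : 0 < x) :
    ContinuousOn (fun l => (l / (l ^ 2 + 1) - 1 / (l + x)) * (Real.pi⁻¹ * Real.sqrt l)) (Ici 0) := by
  refine ContinuousOn.mul (ContinuousOn.sub ?_ ?_) (continuousOn_const.mul
    Real.continuous_sqrt.continuousOn)
  · exact ContinuousOn.div continuousOn_id (by fun_prop) (fun l _ => by positivity)
  · exact ContinuousOn.div continuousOn_const (by fun_prop)
      (fun l hl => by have : (0:ℝ) ≤ l := hl; positivity)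

lemma f_integrable (x : ℝ) (hx : 0 < x) :
    IntegrableOn (fun l => (l / (l ^ 2 + 1) - 1 / (l + x)) * (Real.pi⁻¹ * Real.sqrt l))
      (Ioi 0) := by
  rw [show Ioi (0:ℝ) = Ioc 0 1 ∪ Ioi 1 from (Ioc_union_Ioi_eq_Ioi zero_le_one).symm]
  refine IntegrableOn.union ?_ ?_
  · exact (((f_cont x hx).mono Icc_subset_Ici_self).integrableOn_Icc).mono_set
      Ioc_subset_Icc_self
  · have hg : IntegrableOn (fun l : ℝ => (x+1) * l ^ (-(3/2) : ℝ)) (Ioi 1) :=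
      (integrableOn_Ioi_rpow_of_lt (by norm_num) one_pos).const_mul _
    refine Integrable.mono hg ?_ ?_
    · exact (((f_cont x hx).mono (t := Ioi 1) (fun y hy => le_of_lt (lt_of_lt_of_le one_pos (le_of_lt hy)))).aestronglyMeasurable
        measurableSet_Ioi)
    · filter_upwards [ae_restrict_mem measurableSet_Ioi] with l hl
      have hl1 : (1:ℝ) < l := hl
      have hl0 : (0:ℝ) < l := lt_trans one_pos hl1
      have hslp : 0 < Real.sqrt l := Real.sqrt_pos.2 hl0
      have hsl : Real.sqrt l ^ 2 = l := Real.sq_sqrt hl0.le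
      have key : (l / (l ^ 2 + 1) - 1 / (l + x)) * (Real.pi⁻¹ * Real.sqrt l)
          = Real.pi⁻¹ * (x / ((x + l) * Real.sqrt l) - 1 / ((1 + l^2) * Real.sqrt l)) := by
        have h1 : (0:ℝ) < l^2+1 := by positivity
        have h2 : (0:ℝ) < l + x := by positivity
        have hpi := Real.pi_ne_zero
        field_simp
        linear_combination ((l*(l+x) - (l^2+1)) * (x+l) * (1+l^2)) * hsl
      have hr : l ^ (-(3/2) : ℝ) = 1 / (l * Real.sqrt l) := by
        rw [Real.rpow_neg hl0.le, show (3:ℝ)/2 = 1 + 1/2 by norm_num,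
          Real.rpow_add hl0, Real.rpow_one, ← Real.sqrt_eq_rpow, one_div]
      rw [key, hr]
      have hA : 0 ≤ x / ((x+l) * Real.sqrt l) := by positivity
      have hB : 0 ≤ 1 / ((1+l^2) * Real.sqrt l) := by positivity
      have hC0 : 0 ≤ 1 / (l * Real.sqrt l) := by positivity
      have hA' : x / ((x + l) * Real.sqrt l) ≤ x / (l * Real.sqrt l) := by
        rw [div_le_div_iff₀ (by positivity) (by positivity)]
        nlinarith [mul_nonneg (mul_nonneg hx.le hx.le) hslp.le]
      have hB' : 1 / ((1 + l^2) * Real.sqrt l) ≤ 1 / (l * Real.sqrt l) := by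
        rw [div_le_div_iff₀ (by positivity) (by positivity)]
        nlinarith [mul_nonneg (mul_nonneg hl0.le hl0.le) hslp.le, mul_nonneg (sq_nonneg (l-1)) hslp.le]
      have hpi : Real.pi⁻¹ ≤ 1 := by
        rw [inv_le_one₀ Real.pi_pos]
        linarith [Real.pi_gt_three]
      rw [Real.norm_eq_abs, Real.norm_eq_abs, abs_mul, abs_mul,
        abs_of_pos (show (0:ℝ) < Real.pi⁻¹ by positivity),
        abs_of_nonneg (show (0:ℝ) ≤ x + 1 by linarith), abs_of_nonneg hC0]
      have hA2 : x / ((x + l) * Real.sqrt l) ≤ x * (1 / (l * Real.sqrt l)) := by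
        rw [mul_one_div]; exact hA'
      have hB2 : 1 / ((1 + l^2) * Real.sqrt l) ≤ 1 * (1 / (l * Real.sqrt l)) := by
        rw [one_mul]; exact hB'
      have habs : |x / ((x + l) * Real.sqrt l) - 1 / ((1 + l^2) * Real.sqrt l)|
          ≤ (x+1) * (1 / (l * Real.sqrt l)) := by
        rw [abs_sub_le_iff]
        constructor <;> nlinarith [hA, hB, hA2, hB2, hC0, hx.le]
      nlinarith [abs_nonneg (x / ((x + l) * Real.sqrt l) - 1 / ((1 + l^2) * Real.sqrt l)),
        Real.pi_pos]


lemma sqrt_tendsto_atTop : Tendsto Real.sqrt atTop atTop := by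
  apply tendsto_atTop_atTop.2
  intro b
  refine ⟨b^2, fun a ha => ?_⟩
  calc b ≤ |b| := le_abs_self b
    _ = Real.sqrt (b^2) := (Real.sqrt_sq_eq_abs b).symm
    _ ≤ Real.sqrt a := Real.sqrt_le_sqrt ha

set_option maxHeartbeats 1000000 in
lemma HH_tendsto (x : ℝ) (hx : 0 < x) :
    Tendsto (HH x) atTop (𝓝 (Real.sqrt x - 1 / Real.sqrt 2)) := by
  have hsx : (0:ℝ) < Real.sqrt x := Real.sqrt_pos.2 hx
  set s := Real.sqrt 2 with hsdef
  have l1 : Tendsto (fun t : ℝ => Real.arctan (t / Real.sqrt x)) atTop (𝓝 (π/2)) :=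
    (Real.tendsto_arctan_atTop.mono_right nhdsWithin_le_nhds).comp
      (tendsto_id.atTop_div_const hsx)
  have l2 : Tendsto (fun t : ℝ => Real.log (t^2 + s*t + 1) - Real.log (t^2 - s*t + 1))
      atTop (𝓝 0) := by
    have hn : Tendsto (fun t : ℝ => 1 + (s * t⁻¹ + t⁻¹^2)) atTop (𝓝 1) := by
      simpa using ((tendsto_inv_atTop_zero.const_mul s).add
        (tendsto_inv_atTop_zero.pow 2)).const_add 1
    have hd : Tendsto (fun t : ℝ => 1 + (-(s * t⁻¹) + t⁻¹^2)) atTop (𝓝 1) := by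
      simpa using (((tendsto_inv_atTop_zero.const_mul s).neg).add
        (tendsto_inv_atTop_zero.pow 2)).const_add 1
    have hq : Tendsto (fun t : ℝ => (1 + (s * t⁻¹ + t⁻¹^2)) / (1 + (-(s * t⁻¹) + t⁻¹^2)))
        atTop (𝓝 1) := by
      have := hn.div hd one_ne_zero
      rw [div_one] at this
      exact this
    have hratio : Tendsto (fun t : ℝ => (t^2 + s*t + 1) / (t^2 - s*t + 1)) atTop (𝓝 1) := by
      refine hq.congr' ?_
      filter_upwards [eventually_gt_atTop (0:ℝ)] with t ht
      have ht' : t ≠ 0 := ht.ne'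
      have hM' : (0:ℝ) < 1 + (-(s * t⁻¹) + t⁻¹^2) := by
        have h2 : (1:ℝ) + (-(s * t⁻¹) + t⁻¹^2) = (t^2 - s*t + 1)/t^2 := by
          field_simp; ring
        rw [h2]
        exact div_pos (hM t) (by positivity)
      rw [div_eq_div_iff hM'.ne' (hM t).ne']
      field_simp
      ring
    have hcomp := (Real.continuousAt_log one_ne_zero).tendsto.comp hratio
    simp only [Real.log_one] at hcomp
    refine hcomp.congr' ?_
    filter_upwards with t
    simp only [Function.comp_apply]
    exact Real.log_div (hP t).ne' (hM t).ne'
  have l3 : Tendsto (fun t : ℝ => Real.arctan (s*t + 1)) atTop (𝓝 (π/2)) :=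
    (Real.tendsto_arctan_atTop.mono_right nhdsWithin_le_nhds).comp
      (tendsto_atTop_add_const_right atTop 1 (tendsto_id.const_mul_atTop hs0))
  have l4 : Tendsto (fun t : ℝ => Real.arctan (s*t - 1)) atTop (𝓝 (π/2)) := by
    have h : Tendsto (fun t : ℝ => s * t - 1) atTop atTop := by
      have := tendsto_atTop_add_const_right atTop (-1) (tendsto_id.const_mul_atTop hs0)
      refine this.congr (fun t => by simp [id]; ring)
    exact (Real.tendsto_arctan_atTop.mono_right nhdsWithin_le_nhds).comp h
  have hall := ((((l1.const_mul (2 * Real.sqrt x)).sub (l2.const_mul (s/4))).sub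
      ((l3.add l4).const_mul (s/2))).const_mul π⁻¹)
  have hval : π⁻¹ * (2 * Real.sqrt x * (π/2) - s/4 * 0 - s/2 * (π/2 + π/2))
      = Real.sqrt x - 1 / s := by
    have h1 : π⁻¹ * (2 * Real.sqrt x * (π/2) - s/4 * 0 - s/2 * (π/2 + π/2))
        = π⁻¹ * π * (Real.sqrt x - s/2) := by ring
    have h12 : s/2 = 1/s := by
      rw [div_eq_div_iff (by norm_num) hs0.ne']
      linear_combination hs2
    rw [h1, inv_mul_cancel₀ Real.pi_ne_zero, one_mul, h12]
  rw [hval] at hall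
  exact hall

lemma HH_zero (x : ℝ) : HH x (Real.sqrt 0) = 0 := by
  rw [Real.sqrt_zero]
  unfold HH
  norm_num [Real.arctan_neg, Real.arctan_zero]

theorem stmt7 (x : ℝ) (hx : 0 < x) :
    Real.sqrt x = 1 / Real.sqrt 2 +
      ∫ l in Set.Ioi (0:ℝ),
        (l / (l ^ 2 + 1) - 1 / (l + x)) * (Real.pi⁻¹ * Real.sqrt l) := by
  have hInt := f_integrable x hx
  have hftc : ∀ b : ℝ, 0 ≤ b →
      (∫ l in (0:ℝ)..b, (l / (l ^ 2 + 1) - 1 / (l + x)) * (Real.pi⁻¹ * Real.sqrt l))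
        = HH x (Real.sqrt b) := by
    intro b hb
    have h := intervalIntegral.integral_eq_sub_of_hasDeriv_right_of_le hb
      (((HH_cont x).comp Real.continuous_sqrt).continuousOn)
      (fun l hl => (G_deriv x hx hl.1).hasDerivWithinAt)
      ((intervalIntegrable_iff_integrableOn_Ioc_of_le hb).2
        (hInt.mono_set (show Set.Ioc (0:ℝ) b ⊆ Set.Ioi 0 from fun y hy => hy.1)))
    simp only [Function.comp_apply] at h
    rw [h, HH_zero, sub_zero]
  have hlim1 : Tendsto (fun b => ∫ l in (0:ℝ)..b,
      (l / (l ^ 2 + 1) - 1 / (l + x)) * (Real.pi⁻¹ * Real.sqrt l)) atTop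
      (𝓝 (∫ l in Ioi (0:ℝ), (l / (l ^ 2 + 1) - 1 / (l + x)) * (Real.pi⁻¹ * Real.sqrt l))) :=
    intervalIntegral_tendsto_integral_Ioi 0 hInt tendsto_id
  have hlim2 : Tendsto (fun b => HH x (Real.sqrt b)) atTop
      (𝓝 (Real.sqrt x - 1 / Real.sqrt 2)) :=
    (HH_tendsto x hx).comp sqrt_tendsto_atTop
  have heq : (∫ l in Ioi (0:ℝ), (l / (l ^ 2 + 1) - 1 / (l + x)) * (Real.pi⁻¹ * Real.sqrt l))
      = Real.sqrt x - 1 / Real.sqrt 2 := by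
    refine tendsto_nhds_unique ?_ hlim2
    refine hlim1.congr' ?_
    filter_upwards [eventually_ge_atTop (0:ℝ)] with b hb
    exact hftc b hb
  rw [heq]
  ring
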